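/- Let β ∈ (0,1), let Z be an integrable real-valued random variable, and define the quantile loss ℒ^β(q, z) = β(z − q) if z > q and (1 − β)(q − z) if z ≤ q. Then q ∈ ℝ minimizes the map q ↦ E[ℒ^β(q, Z)] if and only if P(Z < q) ≤ β and P(Z ≤ q) ≥ β. -/

import Mathlib

open MeasureTheory Filter Topology

/-- Characterization of the minimizers of the expected quantile (pinball) loss:
`q` minimizes `q ↦ E[ℒ^β(q, Z)]` if and only if `P(Z < q) ≤ β` and `P(Z ≤ q) ≥ β`,
i.e. `q` is a `β`-quantile of `Z`. -/
theorem pinball_minimizer_iff_quantile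
    {Ω : Type*} [MeasurableSpace Ω] (P : Measure Ω) [IsProbabilityMeasure P]
    (β : ℝ) (hβ : β ∈ Set.Ioo (0 : ℝ) 1)
    (Z : Ω → ℝ) (hZ : Integrable Z P)
    (L : ℝ → ℝ → ℝ)
    (hL : ∀ q z, L q z = if q < z then β * (z - q) else (1 - β) * (q - z))
    (q : ℝ) :
    (∀ q' : ℝ, ∫ ω, L q (Z ω) ∂P ≤ ∫ ω, L q' (Z ω) ∂P) ↔
      (P {ω | Z ω < q} ≤ ENNReal.ofReal β ∧ ENNReal.ofReal β ≤ P {ω | Z ω ≤ q}) := by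
  obtain ⟨hβ0, hβ1⟩ := hβ
  -- replace Z by a measurable modification Z'
  set Z' := hZ.1.mk Z with hZ'def
  have hZ'm : Measurable Z' := hZ.1.stronglyMeasurable_mk.measurable
  have hae : Z =ᵐ[P] Z' := hZ.1.ae_eq_mk
  have hZ' : Integrable Z' P := hZ.congr hae
  have hset_le : ∀ t : ℝ, P {ω | Z ω ≤ t} = P {ω | Z' ω ≤ t} := by
    intro t
    apply measure_congr
    filter_upwards [hae] with ω h
    show (Z ω ≤ t) = (Z' ω ≤ t)
    rw [h]
  have hset_lt : ∀ t : ℝ, P {ω | Z ω < t} = P {ω | Z' ω < t} := by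
    intro t
    apply measure_congr
    filter_upwards [hae] with ω h
    show (Z ω < t) = (Z' ω < t)
    rw [h]
  have hintegral_eq : ∀ r : ℝ, ∫ ω, L r (Z ω) ∂P = ∫ ω, L r (Z' ω) ∂P := by
    intro r
    apply integral_congr_ae
    filter_upwards [hae] with ω h
    rw [h]
  -- closed form for L
  have hℓ : ∀ r z : ℝ, L r z = β * (z - r) + max (r - z) 0 := by
    intro r z
    rw [hL]
    rcases lt_or_ge r z with h | h
    · rw [if_pos h, max_eq_right (by linarith)]; ring
    · rw [if_neg (not_lt.mpr h), max_eq_left (by linarith)]; ring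
  have hInt : ∀ r : ℝ, Integrable (fun ω => L r (Z' ω)) P := by
    intro r
    have h1 : Integrable (fun ω => β * (Z' ω - r) + max (r - Z' ω) 0) P :=
      ((hZ'.sub (integrable_const r)).const_mul β).add
        (((integrable_const r).sub hZ').sup (integrable_const 0))
    exact h1.congr (Eventually.of_forall fun ω => (hℓ r (Z' ω)).symm)
  -- indicator integrals
  have hind_le : ∀ t : ℝ, ∫ ω, (if Z' ω ≤ t then (1:ℝ) else 0) ∂P
      = (P {ω | Z' ω ≤ t}).toReal := by
    intro t
    have hm : MeasurableSet {ω | Z' ω ≤ t} := hZ'm measurableSet_Iic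
    have : (fun ω => if Z' ω ≤ t then (1:ℝ) else 0)
        = Set.indicator {ω | Z' ω ≤ t} (fun _ => (1:ℝ)) := by
      funext ω; simp [Set.indicator_apply, Set.mem_setOf_eq]
    rw [this, integral_indicator_const (1:ℝ) hm, smul_eq_mul, mul_one]
    rfl
  have hind_lt : ∀ t : ℝ, ∫ ω, (if Z' ω < t then (1:ℝ) else 0) ∂P
      = (P {ω | Z' ω < t}).toReal := by
    intro t
    have hm : MeasurableSet {ω | Z' ω < t} := hZ'm measurableSet_Iio
    have : (fun ω => if Z' ω < t then (1:ℝ) else 0)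
        = Set.indicator {ω | Z' ω < t} (fun _ => (1:ℝ)) := by
      funext ω; simp [Set.indicator_apply, Set.mem_setOf_eq]
    rw [this, integral_indicator_const (1:ℝ) hm, smul_eq_mul, mul_one]
    rfl
  have hIndInt_le : ∀ t : ℝ, Integrable (fun ω => if Z' ω ≤ t then (1:ℝ) else 0) P := by
    intro t
    have hm : MeasurableSet {ω | Z' ω ≤ t} := hZ'm measurableSet_Iic
    have : (fun ω => if Z' ω ≤ t then (1:ℝ) else 0)
        = Set.indicator {ω | Z' ω ≤ t} (fun _ => (1:ℝ)) := by
      funext ω; simp [Set.indicator_apply, Set.mem_setOf_eq]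
    rw [this]; exact (integrable_const (1:ℝ)).indicator hm
  have hIndInt_lt : ∀ t : ℝ, Integrable (fun ω => if Z' ω < t then (1:ℝ) else 0) P := by
    intro t
    have hm : MeasurableSet {ω | Z' ω < t} := hZ'm measurableSet_Iio
    have : (fun ω => if Z' ω < t then (1:ℝ) else 0)
        = Set.indicator {ω | Z' ω < t} (fun _ => (1:ℝ)) := by
      funext ω; simp [Set.indicator_apply, Set.mem_setOf_eq]
    rw [this]; exact (integrable_const (1:ℝ)).indicator hm
  -- difference bounds
  have hdiff_ge : ∀ a b : ℝ, a ≤ b →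
      (b - a) * ((P {ω | Z' ω ≤ a}).toReal - β)
        ≤ (∫ ω, L b (Z' ω) ∂P) - ∫ ω, L a (Z' ω) ∂P := by
    intro a b hab
    have hpt : ∀ ω, (b - a) * ((if Z' ω ≤ a then (1:ℝ) else 0) - β)
        ≤ L b (Z' ω) - L a (Z' ω) := by
      intro ω
      set z := Z' ω with hz
      rw [hℓ, hℓ]
      rcases le_or_gt z a with h | h
      · rw [if_pos h, max_eq_left (by linarith), max_eq_left (by linarith)]
        nlinarith
      · rw [if_neg (not_le.mpr h)]
        rcases le_or_gt z b with h2 | h2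
        · rw [max_eq_left (by linarith), max_eq_right (by linarith)]
          nlinarith
        · rw [max_eq_right (by linarith), max_eq_right (by linarith)]
          nlinarith
    have hIl : Integrable (fun ω => (b - a) * ((if Z' ω ≤ a then (1:ℝ) else 0) - β)) P :=
      (((hIndInt_le a).sub (integrable_const β)).const_mul (b - a))
    have hIr : Integrable (fun ω => L b (Z' ω) - L a (Z' ω)) P := (hInt b).sub (hInt a)
    have := integral_mono hIl hIr hpt
    rw [integral_sub (hInt b) (hInt a)] at this
    calc (b - a) * ((P {ω | Z' ω ≤ a}).toReal - β)
        = ∫ ω, (b - a) * ((if Z' ω ≤ a then (1:ℝ) else 0) - β) ∂P := by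
          rw [integral_const_mul, integral_sub (hIndInt_le a) (integrable_const β),
            hind_le, integral_const, probReal_univ]
          simp
      _ ≤ _ := this
  have hdiff_le : ∀ a b : ℝ, a ≤ b →
      (∫ ω, L b (Z' ω) ∂P) - (∫ ω, L a (Z' ω) ∂P)
        ≤ (b - a) * ((P {ω | Z' ω < b}).toReal - β) := by
    intro a b hab
    have hpt : ∀ ω, L b (Z' ω) - L a (Z' ω)
        ≤ (b - a) * ((if Z' ω < b then (1:ℝ) else 0) - β) := by
      intro ω
      set z := Z' ω with hz
      rw [hℓ, hℓ]
      rcases lt_or_ge z b with h | h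
      · rw [if_pos h]
        rcases le_or_gt z a with h2 | h2
        · rw [max_eq_left (by linarith), max_eq_left (by linarith)]
          nlinarith
        · rw [max_eq_left (by linarith), max_eq_right (by linarith)]
          nlinarith
      · rw [if_neg (not_lt.mpr h), max_eq_right (by linarith), max_eq_right (by linarith)]
        nlinarith
    have hIr : Integrable (fun ω => (b - a) * ((if Z' ω < b then (1:ℝ) else 0) - β)) P :=
      (((hIndInt_lt b).sub (integrable_const β)).const_mul (b - a))
    have hIl : Integrable (fun ω => L b (Z' ω) - L a (Z' ω)) P := (hInt b).sub (hInt a)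
    have := integral_mono hIl hIr hpt
    rw [integral_sub (hInt b) (hInt a)] at this
    calc (∫ ω, L b (Z' ω) ∂P) - (∫ ω, L a (Z' ω) ∂P) ≤ _ := this
      _ = (b - a) * ((P {ω | Z' ω < b}).toReal - β) := by
          rw [integral_const_mul, integral_sub (hIndInt_lt b) (integrable_const β),
            hind_lt, integral_const, probReal_univ]
          simp
  -- translate ENNReal statements to real ones
  have hfin : ∀ s : Set Ω, P s ≠ ⊤ := fun s => measure_ne_top P s
  rw [ENNReal.le_ofReal_iff_toReal_le (hfin _) hβ0.le,
    ENNReal.ofReal_le_iff_le_toReal (hfin _), hset_le, hset_lt]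
  constructor
  · intro hmin
    constructor
    · -- P(Z < q) ≤ β
      by_contra hcon
      push_neg at hcon
      -- find a < q with P(Z ≤ a) > β
      have hunion : (⋃ n : ℕ, {ω | Z' ω ≤ q - 1/(n+1)}) = {ω | Z' ω < q} := by
        ext ω
        simp only [Set.mem_iUnion, Set.mem_setOf_eq]
        constructor
        · rintro ⟨n, hn⟩
          have : (0:ℝ) < 1/(n+1) := by positivity
          linarith
        · intro h
          obtain ⟨n, hn⟩ := exists_nat_one_div_lt (show (0:ℝ) < q - Z' ω by linarith)
          exact ⟨n, by linarith⟩
      have hmono : Monotone (fun n : ℕ => {ω | Z' ω ≤ q - 1/(n+1)}) := by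
        intro m n hmn ω h
        simp only [Set.mem_setOf_eq] at h ⊢
        have hcast : (m:ℝ) + 1 ≤ (n:ℝ) + 1 := by
          have : (m:ℝ) ≤ (n:ℝ) := Nat.cast_le.mpr hmn
          linarith
        have h1 : (1:ℝ)/(n+1) ≤ 1/(m+1) :=
          one_div_le_one_div_of_le (by positivity) hcast
        linarith
      have htend : Tendsto (fun n : ℕ => (P {ω | Z' ω ≤ q - 1/(n+1)}).toReal) atTop
          (𝓝 (P {ω | Z' ω < q}).toReal) := by
        have h1 := tendsto_measure_iUnion_atTop (μ := P) hmono
        rw [hunion] at h1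
        exact (ENNReal.tendsto_toReal (hfin _)).comp h1
      have hev : ∀ᶠ n : ℕ in atTop, β < (P {ω | Z' ω ≤ q - 1/(n+1)}).toReal :=
        htend.eventually_const_lt hcon
      obtain ⟨n, hn⟩ := hev.exists
      set a := q - 1/(n+1 : ℝ) with ha
      have haq : a < q := by
        have : (0:ℝ) < 1/(n+1) := by positivity
        simp only [ha]; linarith
      have := hdiff_ge a q haq.le
      have hpos : 0 < (q - a) * ((P {ω | Z' ω ≤ a}).toReal - β) := by
        apply mul_pos (by linarith)
        simp only [ha]
        linarith
      have hmin' := hmin a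
      rw [hintegral_eq, hintegral_eq] at hmin'
      linarith
    · -- β ≤ P(Z ≤ q)
      by_contra hcon
      push_neg at hcon
      have hinter : (⋂ n : ℕ, {ω | Z' ω ≤ q + 1/(n+1)}) = {ω | Z' ω ≤ q} := by
        ext ω
        simp only [Set.mem_iInter, Set.mem_setOf_eq]
        constructor
        · intro h
          by_contra hc
          push_neg at hc
          obtain ⟨n, hn⟩ := exists_nat_one_div_lt (show (0:ℝ) < Z' ω - q by linarith)
          exact absurd (h n) (by push_neg; linarith)
        · intro h n
          have : (0:ℝ) < 1/(n+1) := by positivity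
          linarith
      have hanti : Antitone (fun n : ℕ => {ω | Z' ω ≤ q + 1/(n+1)}) := by
        intro m n hmn ω h
        simp only [Set.mem_setOf_eq] at h ⊢
        have hcast : (m:ℝ) + 1 ≤ (n:ℝ) + 1 := by
          have : (m:ℝ) ≤ (n:ℝ) := Nat.cast_le.mpr hmn
          linarith
        have h1 : (1:ℝ)/(n+1) ≤ 1/(m+1) :=
          one_div_le_one_div_of_le (by positivity) hcast
        linarith
      have htend : Tendsto (fun n : ℕ => (P {ω | Z' ω ≤ q + 1/(n+1)}).toReal) atTop
          (𝓝 (P {ω | Z' ω ≤ q}).toReal) := by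
        have h1 := tendsto_measure_iInter_atTop (μ := P)
          (fun n : ℕ => (show NullMeasurableSet {ω | Z' ω ≤ q + 1/(n+1)} P from
            (hZ'm measurableSet_Iic).nullMeasurableSet)) hanti ⟨0, hfin _⟩
        rw [hinter] at h1
        exact (ENNReal.tendsto_toReal (hfin _)).comp h1
      have hev : ∀ᶠ n : ℕ in atTop, (P {ω | Z' ω ≤ q + 1/(n+1)}).toReal < β :=
        htend.eventually_lt_const hcon
      obtain ⟨n, hn⟩ := hev.exists
      set b := q + 1/(n+1 : ℝ) with hb
      have hqb : q < b := by
        have : (0:ℝ) < 1/(n+1) := by positivity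
        simp only [hb]; linarith
      have hPlt : (P {ω | Z' ω < b}).toReal < β := by
        have hsub : {ω | Z' ω < b} ⊆ {ω | Z' ω ≤ b} :=
          Set.setOf_subset_setOf.mpr fun ω h => le_of_lt h
        have := ENNReal.toReal_mono (hfin _) (measure_mono hsub)
        linarith
      have := hdiff_le q b hqb.le
      have hneg : (b - q) * ((P {ω | Z' ω < b}).toReal - β) < 0 := by
        apply mul_neg_of_pos_of_neg (by linarith)
        linarith
      have hmin' := hmin b
      rw [hintegral_eq, hintegral_eq] at hmin'
      linarith
  · rintro ⟨h1, h2⟩ q'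
    rw [hintegral_eq, hintegral_eq]
    rcases le_total q q' with h | h
    · have := hdiff_ge q q' h
      nlinarith
    · have := hdiff_le q' q h
      nlinarith
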